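/- Let k ≥ 1 and q, q' ∈ ℚ. For every n ≥ 0, the convolution of the sequences (F^q_{k,m})_m and (F^{q'}_{k,m})_m in degree n equals F^{q+q'}_{k,n}; that is, Σ_{j=0}^{n} F^q_{k,j} · F^{q'}_{k,n−j} = F^{q+q'}_{k,n} in ℚ[t₁,…,t_k]. -/

import Mathlib

open Finset MvPolynomial

/-- The set of partitions `α ⊢ n` with parts at most `k`, encoded as tuples
`α = (α₁, …, α_k) ∈ ℕ^k` (0-indexed) with `∑ j, (j+1)·α_j = n`. -/
def partitions (k n : ℕ) : Finset (Fin k → ℕ) :=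
  (Fintype.piFinset fun _ : Fin k => Finset.range (n + 1)).filter
    fun α => ∑ j : Fin k, (j.1 + 1) * α j = n

/-- The variable `t_{m+1}` of `ℚ[t₁,…,t_k]` (0-indexed), with the convention
`t_j = 0` for `j > k`. -/
noncomputable def tQ (k m : ℕ) : MvPolynomial (Fin k) ℚ :=
  if h : m < k then X ⟨m, h⟩ else 0

/-- The Stirling operator of the first kind: `B q m = q(q+1)⋯(q+m-1)`, i.e.
`B q m = B_{m-1}(q)` in the paper's notation, with `B q 0 = B_{-1}(q) = 1`. -/
def B (q : ℚ) (m : ℕ) : ℚ := ∏ i ∈ Finset.range m, (q + i)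

/-- The `q`-th convolution root of the generalized Fibonacci polynomial:
`F^q_{k,n} = ∑_{α ⊢ n} (B_{|α|-1}(q) / (α₁!⋯α_k!)) · t^α`, with `F^q_{k,0} = 1`. -/
noncomputable def Fq (k : ℕ) (q : ℚ) (n : ℕ) : MvPolynomial (Fin k) ℚ :=
  if n = 0 then 1 else
    ∑ α ∈ partitions k n,
      C (B q (∑ j, α j) / ∏ j, ((α j).factorial : ℚ)) * ∏ j, X j ^ α j

lemma B_succ (q : ℚ) (m : ℕ) : B q (m + 1) = B q m * (q + m) := by
  rw [B, prod_range_succ, B]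

lemma desc_smeval_neg (q : ℚ) (m : ℕ) :
    (descPochhammer ℤ m).smeval (-q) = (-1) ^ m * B q m := by
  induction m with
  | zero => simp [B]
  | succ m ih =>
    rw [descPochhammer_succ_right, Polynomial.smeval_mul, ih, B_succ,
      Polynomial.smeval_sub, Polynomial.smeval_X, Polynomial.smeval_natCast]
    push_cast
    ring

lemma B_vandermonde (q q' : ℚ) (m : ℕ) :
    B (q + q') m = ∑ i ∈ range (m + 1), (m.choose i : ℚ) * (B q i * B q' (m - i)) := by
  have h := Ring.descPochhammer_smeval_add (R := ℚ) m (Commute.all (-q) (-q'))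
  rw [show (-q) + (-q') = -(q + q') by ring, desc_smeval_neg,
    Finset.Nat.sum_antidiagonal_eq_sum_range_succ_mk] at h
  have h2 : ∀ i ∈ range (m + 1),
      (m.choose i : ℚ) * ((descPochhammer ℤ i).smeval (-q) *
        (descPochhammer ℤ (m - i)).smeval (-q')) =
      (-1) ^ m * ((m.choose i : ℚ) * (B q i * B q' (m - i))) := by
    intro i hi
    rw [desc_smeval_neg, desc_smeval_neg,
      show ((-1:ℚ)) ^ i * B q i * ((-1) ^ (m-i) * B q' (m-i))
        = ((-1) ^ i * (-1) ^ (m-i)) * (B q i * B q' (m-i)) by ring, ← pow_add,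
      Nat.add_sub_cancel' (Nat.lt_succ_iff.mp (mem_range.mp hi))]
    ring
  rw [Finset.sum_congr rfl h2, ← Finset.mul_sum] at h
  exact mul_left_cancel₀ (pow_ne_zero m (by norm_num : (-1 : ℚ) ≠ 0)) h

variable {k : ℕ}

lemma choose_fiber (α : Fin k → ℕ) (i : ℕ) :
    ∑ β ∈ (Fintype.piFinset fun j => range (α j + 1)).filter (fun β => ∑ j, β j = i),
      ∏ j, ((α j).choose (β j) : ℚ) = ((∑ j, α j).choose i : ℚ) := by
  have key : ∑ β ∈ Fintype.piFinset fun j : Fin k => range (α j + 1),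
      Polynomial.C (∏ j, ((α j).choose (β j) : ℚ)) * Polynomial.X ^ (∑ j, β j)
      = (Polynomial.X + 1) ^ (∑ j, α j) := by
    calc ∑ β ∈ Fintype.piFinset fun j : Fin k => range (α j + 1),
          Polynomial.C (∏ j, ((α j).choose (β j) : ℚ)) * Polynomial.X ^ (∑ j, β j)
        = ∑ β ∈ Fintype.piFinset fun j : Fin k => range (α j + 1),
          ∏ j, (Polynomial.C (((α j).choose (β j) : ℚ)) * Polynomial.X ^ (β j)) := by
          refine sum_congr rfl fun β _ => ?_
          rw [Finset.prod_mul_distrib, prod_pow_eq_pow_sum]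
          congr 1
          exact (map_prod (Polynomial.C : ℚ →+* Polynomial ℚ)
            (fun j => (((α j).choose (β j) : ℚ))) Finset.univ)
      _ = ∏ j, ∑ b ∈ range (α j + 1),
            (Polynomial.C ((((α j)).choose b : ℚ)) * Polynomial.X ^ b) :=
          (Finset.prod_univ_sum (fun j : Fin k => range (α j + 1))
            (fun j b => Polynomial.C (((α j).choose b : ℚ)) * Polynomial.X ^ b)).symm
      _ = ∏ j, (Polynomial.X + 1) ^ (α j) := by
          refine prod_congr rfl fun j _ => ?_
          rw [add_pow]
          refine sum_congr rfl fun b _ => ?_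
          rw [one_pow, mul_one, Polynomial.C_eq_natCast, mul_comm]
      _ = (Polynomial.X + 1) ^ ∑ j, α j := prod_pow_eq_pow_sum _ _ _
  have hc := congrArg (fun p => Polynomial.coeff p i) key
  simp only [Polynomial.finset_sum_coeff, Polynomial.coeff_C_mul, Polynomial.coeff_X_pow,
    Polynomial.coeff_X_add_one_pow] at hc
  rw [Finset.sum_filter]
  rw [← hc]
  refine sum_congr rfl fun β _ => ?_
  by_cases h : ∑ j, β j = i
  · simp [h]
  · rw [if_neg h, if_neg (Ne.symm h), mul_zero]

lemma sum_box (α : Fin k → ℕ) (f : ℕ → ℚ) :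
    ∑ β ∈ Fintype.piFinset fun j : Fin k => range (α j + 1),
      f (∑ j, β j) * ∏ j, ((α j).choose (β j) : ℚ)
    = ∑ i ∈ range ((∑ j, α j) + 1), ((∑ j, α j).choose i : ℚ) * f i := by
  have hmaps : ∀ β ∈ Fintype.piFinset fun j : Fin k => range (α j + 1),
      (∑ j, β j) ∈ range ((∑ j, α j) + 1) := by
    intro β hβ
    rw [mem_range, Nat.lt_succ_iff]
    exact Finset.sum_le_sum fun j _ =>
      Nat.lt_succ_iff.mp (mem_range.mp (Fintype.mem_piFinset.mp hβ j))
  rw [← Finset.sum_fiberwise_of_maps_to hmaps]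
  refine sum_congr rfl fun i hi => ?_
  calc ∑ β ∈ (Fintype.piFinset fun j : Fin k => range (α j + 1)).filter
        (fun β => ∑ j, β j = i), f (∑ j, β j) * ∏ j, ((α j).choose (β j) : ℚ)
      = ∑ β ∈ (Fintype.piFinset fun j : Fin k => range (α j + 1)).filter
        (fun β => ∑ j, β j = i), f i * ∏ j, ((α j).choose (β j) : ℚ) := by
        refine sum_congr rfl fun β hβ => ?_
        rw [(mem_filter.mp hβ).2]
    _ = f i * ∑ β ∈ (Fintype.piFinset fun j : Fin k => range (α j + 1)).filter
        (fun β => ∑ j, β j = i), ∏ j, ((α j).choose (β j) : ℚ) := by rw [Finset.mul_sum]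
    _ = ((∑ j, α j).choose i : ℚ) * f i := by rw [choose_fiber]; ring

lemma scalar_key (q q' : ℚ) (α : Fin k → ℕ) :
    ∑ β ∈ Fintype.piFinset fun j : Fin k => range (α j + 1),
      B q (∑ j, β j) * B q' (∑ j, (α j - β j)) /
        ((∏ j, ((β j).factorial : ℚ)) * ∏ j, ((α j - β j).factorial : ℚ))
    = B (q + q') (∑ j, α j) / ∏ j, ((α j).factorial : ℚ) := by
  have hα : (∏ j, ((α j).factorial : ℚ)) ≠ 0 := by
    refine Finset.prod_ne_zero_iff.mpr fun j _ => ?_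
    exact_mod_cast (Nat.factorial_ne_zero _)
  calc ∑ β ∈ Fintype.piFinset fun j : Fin k => range (α j + 1),
        B q (∑ j, β j) * B q' (∑ j, (α j - β j)) /
          ((∏ j, ((β j).factorial : ℚ)) * ∏ j, ((α j - β j).factorial : ℚ))
      = ∑ β ∈ Fintype.piFinset fun j : Fin k => range (α j + 1),
        (B q (∑ j, β j) * B q' ((∑ j, α j) - ∑ j, β j) * ∏ j, ((α j).choose (β j) : ℚ)) /
          ∏ j, ((α j).factorial : ℚ) := by
        refine sum_congr rfl fun β hβ => ?_
        have hle : ∀ j, β j ≤ α j := fun j =>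
          Nat.lt_succ_iff.mp (mem_range.mp (Fintype.mem_piFinset.mp hβ j))
        have hsub : (∑ j, (α j - β j)) = (∑ j, α j) - ∑ j, β j :=
          Finset.sum_tsub_distrib _ fun j _ => hle j
        have hfac : (∏ j, ((α j).factorial : ℚ)) =
            (∏ j, ((α j).choose (β j) : ℚ)) *
              ((∏ j, ((β j).factorial : ℚ)) * ∏ j, ((α j - β j).factorial : ℚ)) := by
          rw [← Finset.prod_mul_distrib, ← Finset.prod_mul_distrib]
          refine prod_congr rfl fun j _ => ?_
          rw [← mul_assoc]
          exact_mod_cast congrArg (fun m : ℕ => (m : ℚ))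
            (Nat.choose_mul_factorial_mul_factorial (hle j)).symm
        have hb : ((∏ j, ((β j).factorial : ℚ)) * ∏ j, ((α j - β j).factorial : ℚ)) ≠ 0 := by
          refine mul_ne_zero ?_ ?_ <;>
            exact Finset.prod_ne_zero_iff.mpr fun j _ => by
              exact_mod_cast (Nat.factorial_ne_zero _)
        have hch : (∏ j, ((α j).choose (β j) : ℚ)) ≠ 0 := by
          refine Finset.prod_ne_zero_iff.mpr fun j _ => ?_
          exact_mod_cast Nat.choose_pos (hle j) |>.ne'
        rw [hsub, hfac]
        field_simp
    _ = (∑ β ∈ Fintype.piFinset fun j : Fin k => range (α j + 1),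
        (fun i => B q i * B q' ((∑ j, α j) - i)) (∑ j, β j) * ∏ j, ((α j).choose (β j) : ℚ)) /
          ∏ j, ((α j).factorial : ℚ) := by
        rw [Finset.sum_div]
    _ = B (q + q') (∑ j, α j) / ∏ j, ((α j).factorial : ℚ) := by
        rw [sum_box α (fun i => B q i * B q' ((∑ j, α j) - i)), ← B_vandermonde]

/-- weight of a tuple -/
def wtk (k : ℕ) (β : Fin k → ℕ) : ℕ := ∑ j : Fin k, (j.1 + 1) * β j

lemma mem_partitions {n : ℕ} {α : Fin k → ℕ} :
    α ∈ partitions k n ↔ wtk k α = n := by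
  constructor
  · exact fun h => (Finset.mem_filter.mp h).2
  · intro h
    refine Finset.mem_filter.mpr ⟨Fintype.mem_piFinset.mpr fun j => ?_, h⟩
    rw [mem_range, Nat.lt_succ_iff, ← h, wtk]
    calc α j ≤ (j.1 + 1) * α j := Nat.le_mul_of_pos_left _ (Nat.succ_pos _)
      _ ≤ ∑ i : Fin k, (i.1 + 1) * α i :=
        Finset.single_le_sum (f := fun i : Fin k => (i.1 + 1) * α i)
          (fun i _ => Nat.zero_le _) (mem_univ j)

lemma le_of_mem_partitions {n : ℕ} {α : Fin k → ℕ} (h : α ∈ partitions k n) (j : Fin k) :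
    α j ≤ n := by
  rw [← mem_partitions.mp h, wtk]
  calc α j ≤ (j.1 + 1) * α j := Nat.le_mul_of_pos_left _ (Nat.succ_pos _)
    _ ≤ ∑ i : Fin k, (i.1 + 1) * α i :=
      Finset.single_le_sum (f := fun i : Fin k => (i.1 + 1) * α i)
        (fun i _ => Nat.zero_le _) (mem_univ j)

lemma partitions_zero : partitions k 0 = {fun _ => 0} := by
  ext α
  rw [Finset.mem_singleton, mem_partitions]
  constructor
  · intro h
    funext j
    have h0 := (Finset.sum_eq_zero_iff.mp h) j (mem_univ j)
    rcases Nat.mul_eq_zero.mp h0 with h1 | h1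
    · omega
    · exact h1
  · rintro rfl
    simp [wtk]

lemma Fq_eq (q : ℚ) (n : ℕ) : Fq k q n =
    ∑ α ∈ partitions k n,
      C (B q (∑ j, α j) / ∏ j, ((α j).factorial : ℚ)) * ∏ j, X j ^ α j := by
  rw [Fq]
  split_ifs with h
  · subst h
    rw [partitions_zero, Finset.sum_singleton]
    simp [B]
  · rfl

lemma apply_le_wtk (β : Fin k → ℕ) (i : Fin k) : β i ≤ wtk k β := by
  rw [wtk]
  calc β i ≤ (i.1 + 1) * β i := Nat.le_mul_of_pos_left _ (Nat.succ_pos _)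
    _ ≤ ∑ j : Fin k, (j.1 + 1) * β j :=
      Finset.single_le_sum (f := fun j : Fin k => (j.1 + 1) * β j)
        (fun j _ => Nat.zero_le _) (mem_univ i)

lemma wtk_add (β γ : Fin k → ℕ) :
    wtk k (fun j => β j + γ j) = wtk k β + wtk k γ := by
  simp [wtk, mul_add, Finset.sum_add_distrib]

lemma wtk_sub (β γ : Fin k → ℕ) (h : ∀ j, γ j ≤ β j) :
    wtk k (fun j => β j - γ j) = wtk k β - wtk k γ := by
  rw [wtk, wtk, wtk, ← Finset.sum_tsub_distrib _
    (fun j _ => Nat.mul_le_mul_left _ (h j))]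
  exact Finset.sum_congr rfl fun j _ => Nat.mul_sub _ _ _

lemma wtk_mono (β γ : Fin k → ℕ) (h : ∀ j, β j ≤ γ j) : wtk k β ≤ wtk k γ :=
  Finset.sum_le_sum fun j _ => Nat.mul_le_mul_left _ (h j)

/-- summand of `Fq` -/
noncomputable def term (k : ℕ) (q : ℚ) (β : Fin k → ℕ) : MvPolynomial (Fin k) ℚ :=
  C (B q (∑ j, β j) / ∏ j, ((β j).factorial : ℚ)) * ∏ j, X j ^ β j

lemma Fq_eq' (q : ℚ) (n : ℕ) : Fq k q n = ∑ α ∈ partitions k n, term k q α := Fq_eq q n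

theorem Fq_convolution_add (k : ℕ) (hk : 1 ≤ k) (q q' : ℚ) (n : ℕ) :
    ∑ j ∈ Finset.range (n + 1), Fq k q j * Fq k q' (n - j) = Fq k (q + q') n := by
  classical
  set Q : Finset (Fin k → ℕ) :=
    (Fintype.piFinset fun _ : Fin k => range (n + 1)).filter (fun β => wtk k β ≤ n) with hQ
  have hpart : ∀ j ∈ range (n + 1),
      partitions k j = Q.filter (fun β => wtk k β = j) := by
    intro j hj
    ext β
    rw [mem_partitions, hQ, Finset.mem_filter, Finset.mem_filter, Fintype.mem_piFinset]
    constructor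
    · intro h
      have hj' := mem_range.mp hj
      refine ⟨⟨fun i => mem_range.mpr ?_, by omega⟩, h⟩
      have := apply_le_wtk β i
      omega
    · rintro ⟨_, h⟩; exact h
  -- the function on the (α, β) side
  set G : (Σ _ : Fin k → ℕ, Fin k → ℕ) → MvPolynomial (Fin k) ℚ := fun p =>
    C (B q (∑ j, p.2 j) * B q' (∑ j, (p.1 j - p.2 j)) /
      ((∏ j, ((p.2 j).factorial : ℚ)) * ∏ j, ((p.1 j - p.2 j).factorial : ℚ))) *
      ∏ j, X j ^ p.1 j with hG
  calc ∑ j ∈ range (n + 1), Fq k q j * Fq k q' (n - j)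
      = ∑ j ∈ range (n + 1), ∑ β ∈ partitions k j, ∑ γ ∈ partitions k (n - j),
          term k q β * term k q' γ := by
        refine Finset.sum_congr rfl fun j _ => ?_
        rw [Fq_eq', Fq_eq', Finset.sum_mul_sum]
    _ = ∑ j ∈ range (n + 1), ∑ β ∈ Q.filter (fun β => wtk k β = j),
          ∑ γ ∈ partitions k (n - wtk k β), term k q β * term k q' γ := by
        refine Finset.sum_congr rfl fun j hj => ?_
        rw [hpart j hj]
        refine Finset.sum_congr rfl fun β hβ => ?_
        rw [← (Finset.mem_filter.mp hβ).2]
    _ = ∑ β ∈ Q, ∑ γ ∈ partitions k (n - wtk k β), term k q β * term k q' γ := by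
        refine Finset.sum_fiberwise_of_maps_to (fun β hβ => ?_) _
        rw [hQ, Finset.mem_filter] at hβ
        exact mem_range.mpr (Nat.lt_succ_iff.mpr hβ.2)
    _ = ∑ p ∈ Q.sigma (fun β => partitions k (n - wtk k β)),
          term k q p.1 * term k q' p.2 :=
        Finset.sum_sigma' _ _ _
    _ = ∑ p ∈ (partitions k n).sigma
          (fun α => Fintype.piFinset fun j => range (α j + 1)), G p := by
        refine Finset.sum_nbij' (fun p => ⟨fun j => p.1 j + p.2 j, p.1⟩)
          (fun p => ⟨p.2, fun j => p.1 j - p.2 j⟩) ?_ ?_ ?_ ?_ ?_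
        · rintro ⟨β, γ⟩ hp
          dsimp only
          rw [Finset.mem_sigma] at hp ⊢
          dsimp only at hp ⊢
          obtain ⟨h1, h2⟩ := hp
          rw [hQ, Finset.mem_filter] at h1
          have h2' := mem_partitions.mp h2
          refine ⟨mem_partitions.mpr ?_, Fintype.mem_piFinset.mpr fun j => mem_range.mpr ?_⟩
          · rw [wtk_add]; omega
          · omega
        · rintro ⟨α, β⟩ hp
          dsimp only
          rw [Finset.mem_sigma] at hp ⊢
          dsimp only at hp ⊢
          obtain ⟨h1, h2⟩ := hp
          have hle : ∀ j, β j ≤ α j := fun j =>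
            Nat.lt_succ_iff.mp (mem_range.mp (Fintype.mem_piFinset.mp h2 j))
          have hw : wtk k α = n := mem_partitions.mp h1
          have hwle : wtk k β ≤ n := hw ▸ wtk_mono _ _ hle
          refine ⟨?_, mem_partitions.mpr ?_⟩
          · rw [hQ, Finset.mem_filter]
            refine ⟨Fintype.mem_piFinset.mpr fun j => mem_range.mpr ?_, hwle⟩
            have := le_of_mem_partitions h1 j
            have := hle j
            omega
          · rw [wtk_sub _ _ hle, hw]
        · rintro ⟨β, γ⟩ hp
          have : (fun j => β j + γ j - β j) = γ :=
            funext fun j => Nat.add_sub_cancel_left _ _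
          simp only [this]
        · rintro ⟨α, β⟩ hp
          rw [Finset.mem_sigma] at hp
          have hle : ∀ j, β j ≤ α j := fun j =>
            Nat.lt_succ_iff.mp (mem_range.mp (Fintype.mem_piFinset.mp hp.2 j))
          have : (fun j => β j + (α j - β j)) = α :=
            funext fun j => Nat.add_sub_cancel' (hle j)
          simp only [this]
        · rintro ⟨β, γ⟩ hp
          rw [hG]
          simp only [Nat.add_sub_cancel_left]
          rw [term, term, show (∏ j, X j ^ (β j + γ j) : MvPolynomial (Fin k) ℚ)
              = (∏ j, X j ^ β j) * ∏ j, X j ^ γ j by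
            rw [← Finset.prod_mul_distrib]
            exact Finset.prod_congr rfl fun j _ => pow_add _ _ _,
            ← div_mul_div_comm, map_mul]
          ring
    _ = ∑ α ∈ partitions k n, ∑ β ∈ Fintype.piFinset fun j => range (α j + 1),
          G ⟨α, β⟩ := Finset.sum_sigma _ _ _
    _ = ∑ α ∈ partitions k n, term k (q + q') α := by
        refine Finset.sum_congr rfl fun α _ => ?_
        rw [hG, term]
        simp only
        rw [← Finset.sum_mul, ← map_sum, scalar_key]
    _ = Fq k (q + q') n := (Fq_eq' _ _).symm
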